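/- Let X ⊆ ℤⁿ be a subset such that for every positive integer n the n-fold Minkowski sum [n]X = X + ⋯ + X is pseudo-convex. Then the subgroup ℤ(X - X) generated by all differences x - x' (x, x' ∈ X) is a pure subgroup of ℤⁿ. -/

import Mathlib

open Pointwise

/-- The canonical embedding of the integer lattice into `ℝⁿ`. -/
def intCast {n : ℕ} (m : Fin n → ℤ) : Fin n → ℝ := fun i => (m i : ℝ)

/-- A polyhedron: the intersection of finitely many closed halfspaces. -/
def IsPolyhedron {n : ℕ} (P : Set (Fin n → ℝ)) : Prop :=
  ∃ s : Finset ((Fin n → ℝ) × ℝ),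
    P = {x | ∀ q ∈ s, ∑ i, q.1 i * x i ≤ q.2}

/-- Pseudo-convexity for subsets of `ℤⁿ`. -/
def PseudoConvex {n : ℕ} (X : Set (Fin n → ℤ)) : Prop :=
  IsPolyhedron (convexHull ℝ (intCast '' X)) ∧
    ∀ m : Fin n → ℤ, intCast m ∈ convexHull ℝ (intCast '' X) → m ∈ X

/-- `AddMonoid.IsTorsionFree` as defined in the older Mathlib (removed since). -/
def AddMonoid.IsTorsionFree (G : Type*) [AddMonoid G] : Prop :=
  ∀ g : G, g ≠ 0 → ¬IsOfFinAddOrder g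

/-- The `k`-fold Minkowski sum `[k]X = X + ⋯ + X`. -/
def iterSum {n : ℕ} (X : Set (Fin n → ℤ)) : ℕ → Set (Fin n → ℤ)
  | 0 => X
  | k + 1 => iterSum X k + X

lemma iterSum_add_iterSum {n : ℕ} (X : Set (Fin n → ℤ)) (k k' : ℕ) :
    iterSum X k + iterSum X k' ⊆ iterSum X (k + k' + 1) := by
  induction k' with
  | zero => simp [iterSum]
  | succ k' ih =>
      intro a ha
      rw [iterSum, ← add_assoc] at ha
      show a ∈ iterSum X (k + k' + 1 + 1)
      rw [iterSum]
      exact Set.add_subset_add_right ih ha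

lemma rep_lemma {n : ℕ} (X : Set (Fin n → ℤ)) (x₀ : Fin n → ℤ) (hx₀ : x₀ ∈ X) :
    ∀ s ∈ AddSubgroup.closure (X - X),
      ∃ k A B, A ∈ iterSum X k ∧ B ∈ iterSum X k ∧ s = A - B := by
  intro s hs
  induction hs using AddSubgroup.closure_induction with
  | mem x hx =>
      obtain ⟨a, ha, b, hb, rfl⟩ := hx
      exact ⟨0, a, b, ha, hb, rfl⟩
  | zero => exact ⟨0, x₀, x₀, hx₀, hx₀, by simp⟩
  | add x y hx hy ihx ihy =>
      obtain ⟨k, A, B, hA, hB, rfl⟩ := ihx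
      obtain ⟨k', A', B', hA', hB', rfl⟩ := ihy
      exact ⟨k + k' + 1, A + A', B + B',
        iterSum_add_iterSum X k k' (Set.add_mem_add hA hA'),
        iterSum_add_iterSum X k k' (Set.add_mem_add hB hB'), by abel⟩
  | neg x hx ihx =>
      obtain ⟨k, A, B, hA, hB, rfl⟩ := ihx
      exact ⟨k, B, A, hB, hA, by abel⟩

lemma diff_mem_closure {n : ℕ} (X : Set (Fin n → ℤ)) (k : ℕ) :
    ∀ a ∈ iterSum X k, ∀ b ∈ iterSum X k,
      a - b ∈ AddSubgroup.closure (X - X) := by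
  induction k with
  | zero => intro a ha b hb
            exact AddSubgroup.subset_closure (Set.sub_mem_sub ha hb)
  | succ k ih =>
      intro a ha b hb
      obtain ⟨a₁, ha₁, x, hx, rfl⟩ := ha
      obtain ⟨b₁, hb₁, y, hy, rfl⟩ := hb
      have : a₁ + x - (b₁ + y) = (a₁ - b₁) + (x - y) := by abel
      rw [this]
      exact AddSubgroup.add_mem _ (ih a₁ ha₁ b₁ hb₁)
        (AddSubgroup.subset_closure (Set.sub_mem_sub hx hy))

theorem diff_group_pure_of_iterated_sums_pseudoConvex
    (n : ℕ) (X : Set (Fin n → ℤ))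
    (h : ∀ k : ℕ, PseudoConvex (iterSum X k)) :
    AddMonoid.IsTorsionFree ((Fin n → ℤ) ⧸ AddSubgroup.closure (X - X)) := by
  set S := AddSubgroup.closure (X - X) with hS
  -- key claim
  have key : ∀ (g : Fin n → ℤ) (m : ℕ), 0 < m → m • g ∈ S → g ∈ S := by
    intro g m hm hmg
    rcases Set.eq_empty_or_nonempty X with hX | ⟨x₀, hx₀⟩
    · -- X empty: S = ⊥
      have hSbot : S = ⊥ := by
        rw [hS, hX]; simp
      rw [hSbot] at hmg ⊢
      have : m • g = 0 := hmg
      have hg : g = 0 := by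
        funext i
        have h2 := congrFun this i
        simp at h2
        rcases h2 with h1 | h2
        · exact absurd h1 hm.ne'
        · exact h2
      simp [hg]
    · obtain ⟨k, A, B, hA, hB, hrep⟩ := rep_lemma X x₀ hx₀ (m • g) hmg
      -- show B + g ∈ iterSum X k
      have hAhull : intCast A ∈ convexHull ℝ (intCast '' iterSum X k) :=
        subset_convexHull ℝ _ ⟨A, hA, rfl⟩
      have hBhull : intCast B ∈ convexHull ℝ (intCast '' iterSum X k) :=
        subset_convexHull ℝ _ ⟨B, hB, rfl⟩
      have hm' : (m : ℝ) ≠ 0 := by exact_mod_cast hm.ne'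
      have hmpos : (0:ℝ) < m := by exact_mod_cast hm
      have hcomb : (1/(m:ℝ)) • intCast A + (1 - 1/(m:ℝ)) • intCast B
          = intCast (B + g) := by
        funext i
        have hi : (m:ℤ) * g i = A i - B i := by
          have := congrFun hrep i
          simpa [nsmul_eq_mul] using this
        have hiR : (m:ℝ) * (g i : ℝ) = (A i : ℝ) - (B i : ℝ) := by
          exact_mod_cast congrArg (Int.cast : ℤ → ℝ) hi
        simp only [intCast, Pi.add_apply, Pi.smul_apply, smul_eq_mul, Int.cast_add]
        field_simp
        nlinarith [hiR]
      have hp : intCast (B + g) ∈ convexHull ℝ (intCast '' iterSum X k) := by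
        rw [← hcomb]
        exact (convex_convexHull ℝ _) hAhull hBhull
          (by positivity) (by
            have : 1/(m:ℝ) ≤ 1 := by
              rw [div_le_one hmpos]; exact_mod_cast hm
            linarith) (by ring)
      have hBg : B + g ∈ iterSum X k := (h k).2 (B + g) hp
      have : (B + g) - B ∈ S := diff_mem_closure X k _ hBg _ hB
      simpa using this
  -- torsion-freeness
  intro g hg hfin
  apply hg
  obtain ⟨m, hm, hmg⟩ := isOfFinAddOrder_iff_nsmul_eq_zero.mp hfin
  obtain ⟨g', rfl⟩ := QuotientAddGroup.mk_surjective g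
  rw [← QuotientAddGroup.mk_nsmul] at hmg
  rw [QuotientAddGroup.eq_zero_iff] at hmg ⊢
  exact key g' m hm hmg
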